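/- Let G be a group, φ : G → Z a group homomorphism, and μ ∈ G with φ(μ) = 1. If β is a nonzero element of the group ring Z[G], then the support of (1 − μ)·β contains two elements g, h with φ(g) ≠ φ(h). Consequently, if every element of the support of (1 − μ)·β lies in the kernel of φ, then β = 0; in particular left multiplication by (1 − μ) is injective on Z[G]. -/

import Mathlib

/-- If `φ : G → ℤ` is a homomorphism with `φ μ = 1`, then for nonzero `β` in `ℤ[G]`
the support of `(1 - μ)·β` contains elements with different `φ`-values; consequently
if the support of `(1 - μ)·β` lies in `ker φ` then `β = 0`, and left multiplication
by `1 - μ` is injective. -/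
theorem stmt_4 {G : Type*} [Group G] (φ : G → ℤ)
    (hφ : ∀ a b : G, φ (a * b) = φ a + φ b)
    (μ : G) (hμ : φ μ = 1) :
    (∀ β : MonoidAlgebra ℤ G, β ≠ 0 →
      ∃ g ∈ ((1 - MonoidAlgebra.single μ (1 : ℤ)) * β).coeff.support,
      ∃ h ∈ ((1 - MonoidAlgebra.single μ (1 : ℤ)) * β).coeff.support,
        φ g ≠ φ h) ∧
    (∀ β : MonoidAlgebra ℤ G,
      (∀ g ∈ ((1 - MonoidAlgebra.single μ (1 : ℤ)) * β).coeff.support, φ g = 0) →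
      β = 0) ∧
    Function.Injective (fun β : MonoidAlgebra ℤ G =>
      (1 - MonoidAlgebra.single μ (1 : ℤ)) * β) := by
  have hcoe : ∀ (β : MonoidAlgebra ℤ G) (x : G),
      ((1 - MonoidAlgebra.single μ (1:ℤ)) * β).coeff x = β.coeff x - β.coeff (μ⁻¹ * x) := by
    intro β x
    rw [sub_mul, one_mul, MonoidAlgebra.coeff_sub, Finsupp.sub_apply, MonoidAlgebra.coeff_single_mul_apply, one_mul]
  have key : ∀ β : MonoidAlgebra ℤ G, β ≠ 0 →
      ∃ g ∈ ((1 - MonoidAlgebra.single μ (1 : ℤ)) * β).coeff.support,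
      ∃ h ∈ ((1 - MonoidAlgebra.single μ (1 : ℤ)) * β).coeff.support,
        φ g ≠ φ h := by
    intro β hβ
    obtain ⟨g, hg, hgmax⟩ := β.coeff.support.exists_max_image φ (Finsupp.support_nonempty_iff.2 (mt MonoidAlgebra.coeff_eq_zero.1 hβ))
    obtain ⟨h, hh, hhmin⟩ := β.coeff.support.exists_min_image φ (Finsupp.support_nonempty_iff.2 (mt MonoidAlgebra.coeff_eq_zero.1 hβ))
    refine ⟨μ * g, ?_, h, ?_, ?_⟩
    · rw [Finsupp.mem_support_iff, hcoe]
      have h1 : β.coeff (μ * g) = 0 := by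
        by_contra hne
        have := hgmax _ (Finsupp.mem_support_iff.2 hne)
        rw [hφ, hμ] at this; omega
      rw [h1, inv_mul_cancel_left, zero_sub, neg_ne_zero]
      exact Finsupp.mem_support_iff.1 hg
    · rw [Finsupp.mem_support_iff, hcoe]
      have h2 : β.coeff (μ⁻¹ * h) = 0 := by
        by_contra hne
        have hle := hhmin _ (Finsupp.mem_support_iff.2 hne)
        have : φ (μ * (μ⁻¹ * h)) = φ μ + φ (μ⁻¹ * h) := hφ _ _
        rw [mul_inv_cancel_left, hμ] at this
        omega
      rw [h2, sub_zero]
      exact Finsupp.mem_support_iff.1 hh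
    · have h3 : φ (μ * g) = 1 + φ g := by rw [hφ, hμ]
      have h4 := hgmax h hh
      omega
  have part2 : ∀ β : MonoidAlgebra ℤ G,
      (∀ g ∈ ((1 - MonoidAlgebra.single μ (1 : ℤ)) * β).coeff.support, φ g = 0) →
      β = 0 := by
    intro β hs
    by_contra hβ
    obtain ⟨g, hg, h, hh, hne⟩ := key β hβ
    exact hne ((hs g hg).trans (hs h hh).symm)
  refine ⟨key, part2, ?_⟩
  intro a b hab
  have hz : (1 - MonoidAlgebra.single μ (1:ℤ)) * (a - b) = 0 := by
    rw [mul_sub]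
    simpa [sub_eq_zero] using hab
  have := part2 (a - b) (by rw [hz]; simp)
  exact sub_eq_zero.1 this
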